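/- arXiv:2301.09020 — 2 statements merged into one kernel-verified Lean document; each statement's English description precedes it below -/
import Mathlib

section
/- (Mass identity.) The following identity holds: (1/n) ∑_{i=1}^n D_i / K̂(X_i−) + ΔC(τ)/(n · K̂(τ−)) = 1. -/
open Finset
open scoped Classical

noncomputable section

namespace SurvStmt

/-- The finite set of distinct observed times `{X_1, …, X_n}`. -/
def times {n : ℕ} (X : Fin n → ℝ) : Finset ℝ := Finset.image X Finset.univ

/-- `Y(t) = #{i : X_i ≥ t}`, as a real number. -/
def Yat {n : ℕ} (X : Fin n → ℝ) (t : ℝ) : ℝ :=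
  ((Finset.univ.filter (fun i => t ≤ X i)).card : ℝ)

/-- `Y(t+) = #{i : X_i > t}`, as a real number. -/
def Yplus {n : ℕ} (X : Fin n → ℝ) (t : ℝ) : ℝ :=
  ((Finset.univ.filter (fun i => t < X i)).card : ℝ)

/-- `ΔN(t) = #{i : X_i = t, D_i = 1}`, as a real number. -/
def dN {n : ℕ} (X : Fin n → ℝ) (D : Fin n → Bool) (t : ℝ) : ℝ :=
  ((Finset.univ.filter (fun i => X i = t ∧ D i = true)).card : ℝ)

/-- `ΔC(t) = #{i : X_i = t, D_i = 0}`, as a real number. -/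
def dC {n : ℕ} (X : Fin n → ℝ) (D : Fin n → Bool) (t : ℝ) : ℝ :=
  ((Finset.univ.filter (fun i => X i = t ∧ D i = false)).card : ℝ)

/-- `Y†(t) = Y(t) − ΔN(t)`. -/
def Ydag {n : ℕ} (X : Fin n → ℝ) (D : Fin n → Bool) (t : ℝ) : ℝ :=
  Yat X t - dN X D t

/-- `τ = max_i X_i`, the largest observation time (0 if there is no data). -/
def tau {n : ℕ} (X : Fin n → ℝ) : ℝ := WithBot.unbotD 0 ((times X).max)

/-- Censoring product-limit estimator `K̂(t) = ∏_{u ≤ t} (1 − ΔC(u)/Y†(u))`. -/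
def Khat {n : ℕ} (X : Fin n → ℝ) (D : Fin n → Bool) (t : ℝ) : ℝ :=
  ∏ u ∈ (times X).filter (fun u => u ≤ t), (1 - dC X D u / Ydag X D u)

/-- Left limit `K̂(t−) = ∏_{u < t} (1 − ΔC(u)/Y†(u))`. -/
def Kminus {n : ℕ} (X : Fin n → ℝ) (D : Fin n → Bool) (t : ℝ) : ℝ :=
  ∏ u ∈ (times X).filter (fun u => u < t), (1 - dC X D u / Ydag X D u)

/-- Failure product-limit estimator `Ŝ_PL(t) = ∏_{u ≤ t} (1 − ΔN(u)/Y(u))`. -/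
def SPL {n : ℕ} (X : Fin n → ℝ) (D : Fin n → Bool) (t : ℝ) : ℝ :=
  ∏ u ∈ (times X).filter (fun u => u ≤ t), (1 - dN X D u / Yat X u)

/-- Left limit `Ŝ_PL(t−) = ∏_{u < t} (1 − ΔN(u)/Y(u))`. -/
def SPLminus {n : ℕ} (X : Fin n → ℝ) (D : Fin n → Bool) (t : ℝ) : ℝ :=
  ∏ u ∈ (times X).filter (fun u => u < t), (1 - dN X D u / Yat X u)

/-- IPCW estimator `F̂_IPCW(t) = (1/n) ∑_i D_i 1{X_i ≤ t} / K̂(X_i−)`. -/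
def FIPCW {n : ℕ} (X : Fin n → ℝ) (D : Fin n → Bool) (t : ℝ) : ℝ :=
  (1 / (n : ℝ)) * ∑ i : Fin n,
    (if D i = true then (1 : ℝ) else 0) * (if X i ≤ t then (1 : ℝ) else 0) / Kminus X D (X i)

/-- IPCW survival estimator `S̃_IPCW(t) = (1/n) ∑_i D_i 1{X_i > t} / K̂(X_i−)`. -/
def SIPCW {n : ℕ} (X : Fin n → ℝ) (D : Fin n → Bool) (t : ℝ) : ℝ :=
  (1 / (n : ℝ)) * ∑ i : Fin n,
    (if D i = true then (1 : ℝ) else 0) * (if t < X i then (1 : ℝ) else 0) / Kminus X D (X i)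

/-- RTTR jump weight `J(v) = 1/(n · K̂(v−))`. -/
def Jw {n : ℕ} (X : Fin n → ℝ) (D : Fin n → Bool) (v : ℝ) : ℝ :=
  1 / ((n : ℝ) * Kminus X D v)

/-- Redistribute-to-the-right estimator
`Ŝ_RTTR(t) = 1 − ∑_{v ≤ t} [J(v) ΔN(v) 1{v < τ} + J(τ) Y(τ) 1{v = τ}]`. -/
def SRTTR {n : ℕ} (X : Fin n → ℝ) (D : Fin n → Bool) (t : ℝ) : ℝ :=
  1 - ∑ v ∈ (times X).filter (fun v => v ≤ t),
      (Jw X D v * dN X D v * (if v < tau X then (1 : ℝ) else 0)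
        + Jw X D (tau X) * Yat X (tau X) * (if v = tau X then (1 : ℝ) else 0))


section Aux
variable {n : ℕ} (X : Fin n → ℝ) (D : Fin n → Bool)

lemma count_split (t : ℝ) : Yat X t = Yplus X t + dN X D t + dC X D t := by
  unfold Yat Yplus dN dC
  simp only [Finset.card_filter]
  push_cast
  rw [← Finset.sum_add_distrib, ← Finset.sum_add_distrib]
  refine Finset.sum_congr rfl fun i _ => ?_
  by_cases h1 : X i = t
  · subst h1
    cases hD : D i <;> simp [hD]
  · by_cases h2 : t ≤ X i
    · have h3 : t < X i := lt_of_le_of_ne h2 (Ne.symm h1)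
      simp [h1, h2, h3]
    · have h3 : ¬ t < X i := fun h => h2 h.le
      simp [h1, h2, h3]

lemma Yat_one_le {t : ℝ} (ht : t ∈ times X) : 1 ≤ Yat X t := by
  obtain ⟨i, _, hi⟩ := Finset.mem_image.mp ht
  unfold Yat
  have : i ∈ Finset.univ.filter (fun i => t ≤ X i) := by
    simp [hi.le, le_of_eq hi.symm]
  have hcard : 1 ≤ (Finset.univ.filter (fun i => t ≤ X i)).card :=
    Finset.card_pos.mpr ⟨i, this⟩
  exact_mod_cast hcard

lemma Yat_le_Yplus {s t : ℝ} (hst : s < t) : Yat X t ≤ Yplus X s := by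
  unfold Yat Yplus
  have : Finset.univ.filter (fun i => t ≤ X i) ⊆ Finset.univ.filter (fun i => s < X i) := by
    intro i hi
    simp only [Finset.mem_filter, Finset.mem_univ, true_and] at *
    exact lt_of_lt_of_le hst hi
  exact_mod_cast Finset.card_le_card this

lemma dC_nonneg (t : ℝ) : 0 ≤ dC X D t := Nat.cast_nonneg _

lemma Kminus_pos {t : ℝ} (ht : t ∈ times X) : 0 < Kminus X D t := by
  unfold Kminus
  apply Finset.prod_pos
  intro v hv
  obtain ⟨hvT, hvt⟩ := Finset.mem_filter.mp hv
  have h1 : 1 ≤ Yplus X v := le_trans (Yat_one_le X ht) (Yat_le_Yplus X hvt)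
  have hdag : Ydag X D v = Yplus X v + dC X D v := by
    unfold Ydag; rw [count_split X D v]; ring
  have hC : 0 ≤ dC X D v := dC_nonneg X D v
  have hlt : dC X D v / Ydag X D v < 1 := by
    rw [div_lt_one (by rw [hdag]; linarith), hdag]; linarith
  linarith

lemma key : ∀ (k : ℕ) (t : ℝ), ((times X).filter (fun u => u < t)).card = k → t ∈ times X →
    ∑ u ∈ (times X).filter (fun u => u < t), dN X D u / Kminus X D u
      + Yat X t / Kminus X D t = n := by
  intro k
  induction k using Nat.strong_induction_on with
  | _ k ih =>
    intro t hcard ht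
    by_cases hS : ((times X).filter (fun u => u < t)).Nonempty
    · set S := (times X).filter (fun u => u < t) with hSdef
      set s := S.max' hS with hs
      have hsS : s ∈ S := S.max'_mem hS
      have hsT : s ∈ times X := (Finset.mem_filter.mp hsS).1
      have hst : s < t := (Finset.mem_filter.mp hsS).2
      have hmax : ∀ u ∈ S, u ≤ s := fun u hu => S.le_max' u hu
      have hins : S = insert s ((times X).filter (fun u => u < s)) := by
        ext u
        simp only [hSdef, Finset.mem_insert, Finset.mem_filter]
        constructor
        · rintro ⟨hu, hut⟩
          rcases eq_or_lt_of_le (hmax u (Finset.mem_filter.mpr ⟨hu, hut⟩)) with h | h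
          · exact Or.inl h
          · exact Or.inr ⟨hu, h⟩
        · rintro (rfl | ⟨hu, hus⟩)
          · exact ⟨hsT, hst⟩
          · exact ⟨hu, hus.trans hst⟩
      have hnotmem : s ∉ (times X).filter (fun u => u < s) := by simp
      have hcard' : ((times X).filter (fun u => u < s)).card < k := by
        rw [← hcard]
        calc ((times X).filter (fun u => u < s)).card
            < ((times X).filter (fun u => u < s)).card + 1 := Nat.lt_succ_self _
          _ = S.card := by rw [hins, Finset.card_insert_of_notMem hnotmem]
      have hYY : Yat X t = Yplus X s := by
        unfold Yat Yplus
        congr 1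
        apply congrArg
        ext i
        simp only [Finset.mem_filter, Finset.mem_univ, true_and]
        constructor
        · intro h; exact lt_of_lt_of_le hst h
        · intro h
          by_contra hc
          push_neg at hc
          have hmem : X i ∈ S := Finset.mem_filter.mpr
            ⟨Finset.mem_image_of_mem X (Finset.mem_univ i), hc⟩
          exact absurd (hmax _ hmem) (not_le.mpr h)
      have hK : Kminus X D t = (1 - dC X D s / Ydag X D s) * Kminus X D s := by
        unfold Kminus
        rw [show (times X).filter (fun u => u < t) = S from hSdef.symm, hins,
          Finset.prod_insert hnotmem]
      have hIH := ih _ hcard' s rfl hsT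
      have hKs := Kminus_pos X D hsT
      have h1 : (1:ℝ) ≤ Yat X t := Yat_one_le X ht
      have h2 : Yat X t ≤ Yplus X s := Yat_le_Yplus X hst
      have hYp : 0 < Yplus X s := by linarith
      have hCpos : 0 ≤ dC X D s := dC_nonneg X D s
      have hdag : Ydag X D s = Yplus X s + dC X D s := by
        unfold Ydag; rw [count_split X D s]; ring
      have hdagpos : 0 < Ydag X D s := by rw [hdag]; linarith
      have hYs : Yat X s = Yplus X s + dN X D s + dC X D s := count_split X D s
      have hfac : 1 - dC X D s / Ydag X D s = Yplus X s / Ydag X D s := by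
        rw [eq_div_iff hdagpos.ne', sub_mul, div_mul_cancel₀ _ hdagpos.ne', hdag]; ring
      have hkey : dN X D s / Kminus X D s
          + Yat X t / ((1 - dC X D s / Ydag X D s) * Kminus X D s)
          = Yat X s / Kminus X D s := by
        rw [hfac, hYY, hYs, hdag]
        field_simp
        ring
      rw [hins, Finset.sum_insert hnotmem, hK]
      linarith [hkey, hIH]
    · rw [Finset.not_nonempty_iff_eq_empty] at hS
      have hK : Kminus X D t = 1 := by unfold Kminus; rw [hS]; exact Finset.prod_empty
      have hY : Yat X t = n := by
        unfold Yat
        have huniv : Finset.univ.filter (fun i => t ≤ X i) = Finset.univ := by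
          apply Finset.filter_true_of_mem
          intro i _
          by_contra hc
          push_neg at hc
          have hmem : X i ∈ (times X).filter (fun u => u < t) := Finset.mem_filter.mpr
            ⟨Finset.mem_image_of_mem X (Finset.mem_univ i), hc⟩
          rw [hS] at hmem
          exact absurd hmem (Finset.notMem_empty _)
        rw [huniv, Finset.card_univ, Fintype.card_fin]
      rw [hS, hK, hY]
      simp

lemma tau_spec (hn : 0 < n) : tau X ∈ times X ∧ ∀ u ∈ times X, u ≤ tau X := by
  have hne : (times X).Nonempty :=
    ⟨X ⟨0, hn⟩, Finset.mem_image_of_mem _ (Finset.mem_univ _)⟩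
  have hmax : tau X = (times X).max' hne := by
    unfold tau
    rw [← Finset.coe_max', WithBot.unbotD_coe]
  rw [hmax]
  exact ⟨Finset.max'_mem _ _, fun u hu => Finset.le_max' _ u hu⟩

end Aux

/-- mass identity:
`(1/n) ∑_i D_i / K̂(X_i−) + ΔC(τ)/(n K̂(τ−)) = 1`. -/
theorem stmt11 (n : ℕ) (hn : 0 < n) (X : Fin n → ℝ) (D : Fin n → Bool)
    (hX : ∀ i, 0 < X i) :
    (1 / (n : ℝ)) * ∑ i : Fin n,
        (if D i = true then (1 : ℝ) else 0) / Kminus X D (X i)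
      + dC X D (tau X) / ((n : ℝ) * Kminus X D (tau X)) = 1 := by
  obtain ⟨htm, hle⟩ := tau_spec X hn
  have hn' : (n : ℝ) ≠ 0 := Nat.cast_ne_zero.mpr hn.ne'
  -- group the sum over individuals by observed time
  have hsum : ∑ i : Fin n, (if D i = true then (1:ℝ) else 0) / Kminus X D (X i)
      = ∑ u ∈ times X, dN X D u / Kminus X D u := by
    rw [← Finset.sum_fiberwise_of_maps_to
      (fun i _ => Finset.mem_image_of_mem X (Finset.mem_univ i))
      (fun i => (if D i = true then (1:ℝ) else 0) / Kminus X D (X i))]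
    refine Finset.sum_congr rfl fun u hu => ?_
    have hcong : ∀ i ∈ Finset.univ.filter (fun i => X i = u),
        (if D i = true then (1:ℝ) else 0) / Kminus X D (X i)
          = (if D i = true then (1:ℝ) else 0) / Kminus X D u := by
      intro i hi
      rw [(Finset.mem_filter.mp hi).2]
    rw [Finset.sum_congr rfl hcong, ← Finset.sum_div]
    congr 1
    unfold dN
    rw [Finset.sum_boole, Finset.filter_filter]
  -- zero mass above tau
  have hYp0 : Yplus X (tau X) = 0 := by
    unfold Yplus
    have : Finset.univ.filter (fun i => tau X < X i) = ∅ := by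
      apply Finset.filter_false_of_mem
      intro i _
      exact not_lt.mpr (hle _ (Finset.mem_image_of_mem X (Finset.mem_univ i)))
    rw [this]
    simp
  have hYtau : Yat X (tau X) = dN X D (tau X) + dC X D (tau X) := by
    rw [count_split X D (tau X), hYp0]; ring
  -- decompose times at tau
  have hnotmem : tau X ∉ (times X).filter (fun u => u < tau X) := by simp
  have hins : times X = insert (tau X) ((times X).filter (fun u => u < tau X)) := by
    ext u
    simp only [Finset.mem_insert, Finset.mem_filter]
    constructor
    · intro hu
      rcases eq_or_lt_of_le (hle u hu) with h | h
      · exact Or.inl h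
      · exact Or.inr ⟨hu, h⟩
    · rintro (rfl | ⟨hu, _⟩)
      · exact htm
      · exact hu
  have hkey := key X D ((times X).filter (fun u => u < tau X)).card (tau X) rfl htm
  have hKt := Kminus_pos X D htm
  have hmass : ∑ u ∈ times X, dN X D u / Kminus X D u
      + dC X D (tau X) / Kminus X D (tau X) = n := by
    rw [hins, Finset.sum_insert hnotmem]
    rw [hYtau, add_div] at hkey
    linarith
  rw [hsum]
  have hsplit : dC X D (tau X) / ((n : ℝ) * Kminus X D (tau X))
      = (1 / (n : ℝ)) * (dC X D (tau X) / Kminus X D (tau X)) := by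
    rw [mul_comm ((n:ℝ)) (Kminus X D (tau X)), div_mul_eq_div_div]
    ring
  rw [hsplit, ← mul_add, hmass]
  field_simp

end SurvStmt
end
end

section
/- (RTTR equals the self-consistent/product-limit estimator, allowing ties.) For every real t ≥ 0, the redistribute-to-the-right estimator satisfies: Ŝ_RTTR(t) = Ŝ_PL(t) if 0 ≤ t < τ, and Ŝ_RTTR(t) = 0 if t ≥ τ. -/
open Finset
open scoped Classical

noncomputable section

namespace SurvStmt

section Helpers

variable {n : ℕ}

lemma yat_pos {X : Fin n → ℝ} {v : ℝ} (hv : v ∈ times X) : 0 < Yat X v := by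
  obtain ⟨i, _, rfl⟩ := Finset.mem_image.mp hv
  have hmem : i ∈ Finset.univ.filter (fun j => X i ≤ X j) := by simp
  unfold Yat
  exact_mod_cast Finset.card_pos.mpr ⟨i, hmem⟩

lemma yplus_pos {X : Fin n → ℝ} {u v : ℝ} (hv : v ∈ times X) (huv : u < v) :
    0 < Yplus X u := by
  obtain ⟨i, _, rfl⟩ := Finset.mem_image.mp hv
  have hmem : i ∈ Finset.univ.filter (fun j => u < X j) := by simp [huv]
  unfold Yplus
  exact_mod_cast Finset.card_pos.mpr ⟨i, hmem⟩

lemma dN_nonneg (X : Fin n → ℝ) (D : Fin n → Bool) (u : ℝ) : 0 ≤ dN X D u := by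
  unfold dN; positivity

lemma dC_nonneg_s17 (X : Fin n → ℝ) (D : Fin n → Bool) (u : ℝ) : 0 ≤ dC X D u := by
  unfold dC; positivity

lemma yplus_nonneg (X : Fin n → ℝ) (u : ℝ) : 0 ≤ Yplus X u := by
  unfold Yplus; positivity

lemma yat_split (X : Fin n → ℝ) (D : Fin n → Bool) (u : ℝ) :
    Yat X u = dN X D u + dC X D u + Yplus X u := by
  unfold Yat dN dC Yplus
  rw [← Nat.cast_add, ← Nat.cast_add]
  congr 1
  rw [← Finset.card_union_of_disjoint, ← Finset.card_union_of_disjoint]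
  · congr 1
    ext i
    simp only [Finset.mem_union, Finset.mem_filter, Finset.mem_univ, true_and]
    constructor
    · intro h
      rcases eq_or_lt_of_le h with h' | h'
      · rcases Bool.eq_false_or_eq_true (D i) with hD | hD
        · exact Or.inl (Or.inl ⟨h'.symm, hD⟩)
        · exact Or.inl (Or.inr ⟨h'.symm, hD⟩)
      · exact Or.inr h'
    · rintro ((⟨h, _⟩ | ⟨h, _⟩) | h)
      · exact le_of_eq h.symm
      · exact le_of_eq h.symm
      · exact le_of_lt h
  · rw [Finset.disjoint_left]
    rintro i hi hi'
    simp only [Finset.mem_union, Finset.mem_filter, Finset.mem_univ, true_and] at hi hi'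
    rcases hi with ⟨h, _⟩ | ⟨h, _⟩ <;> exact absurd hi' (by simp [h])
  · rw [Finset.disjoint_left]
    rintro i hi hi'
    simp only [Finset.mem_filter, Finset.mem_univ, true_and] at hi hi'
    rw [hi.2] at hi'
    exact absurd hi'.2 (by simp)

end Helpers
section Helpers2

variable {n : ℕ}

lemma ydag_eq (X : Fin n → ℝ) (D : Fin n → Bool) (u : ℝ) :
    Ydag X D u = dC X D u + Yplus X u := by
  have := yat_split X D u; unfold Ydag; linarith

lemma factor_eq (X : Fin n → ℝ) (D : Fin n → Bool) {u : ℝ} (hu : 0 < Yat X u) :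
    (1 - dN X D u / Yat X u) * (1 - dC X D u / Ydag X D u) = Yplus X u / Yat X u := by
  have hsplit := yat_split X D u
  have hd : Ydag X D u = dC X D u + Yplus X u := ydag_eq X D u
  have hdc := dC_nonneg_s17 X D u
  have hyp := yplus_nonneg X u
  by_cases h0 : Ydag X D u = 0
  · have hc : dC X D u = 0 := by linarith [h0 ▸ hd]
    have hp : Yplus X u = 0 := by linarith [h0 ▸ hd]
    have hdn : dN X D u = Yat X u := by unfold Ydag at h0; linarith
    rw [hc, h0, hdn, hp, div_self hu.ne']
    simp
  · have h1 : 1 - dN X D u / Yat X u = Ydag X D u / Yat X u := by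
      rw [one_sub_div hu.ne']; unfold Ydag; ring_nf
    have h2 : 1 - dC X D u / Ydag X D u = Yplus X u / Ydag X D u := by
      rw [one_sub_div h0, hd]; ring_nf
    rw [h1, h2]
    field_simp

lemma kminus_pos (X : Fin n → ℝ) (D : Fin n → Bool) {v : ℝ} (hv : v ∈ times X) :
    0 < Kminus X D v := by
  unfold Kminus
  apply Finset.prod_pos
  intro u hu
  obtain ⟨huT, huv⟩ := Finset.mem_filter.mp hu
  have hyp : 0 < Yplus X u := yplus_pos hv huv
  have hdc := dC_nonneg_s17 X D u
  have hd : Ydag X D u = dC X D u + Yplus X u := ydag_eq X D u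
  have hdpos : 0 < Ydag X D u := by linarith
  have heq : 1 - dC X D u / Ydag X D u = Yplus X u / Ydag X D u := by
    rw [one_sub_div hdpos.ne', hd]; ring_nf
  rw [heq]; positivity

lemma splminus_pos (X : Fin n → ℝ) (D : Fin n → Bool) {v : ℝ} (hv : v ∈ times X) :
    0 < SPLminus X D v := by
  unfold SPLminus
  apply Finset.prod_pos
  intro u hu
  obtain ⟨huT, huv⟩ := Finset.mem_filter.mp hu
  have hyp : 0 < Yplus X u := yplus_pos hv huv
  have hdc := dC_nonneg_s17 X D u
  have hdn := dN_nonneg X D u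
  have hd : Ydag X D u = dC X D u + Yplus X u := ydag_eq X D u
  have hY : 0 < Yat X u := yat_pos huT
  have heq : 1 - dN X D u / Yat X u = Ydag X D u / Yat X u := by
    rw [one_sub_div hY.ne']; unfold Ydag; ring_nf
  rw [heq]
  have : 0 < Ydag X D u := by linarith
  positivity

end Helpers2
section Helpers3

variable {n : ℕ}

lemma prodRatio (hn : 0 < n) (X : Fin n → ℝ) : ∀ t : ℝ,
    ∏ u ∈ (times X).filter (fun u => u < t), (Yplus X u / Yat X u) = Yat X t / n := by
  have hnn : (n : ℝ) ≠ 0 := (Nat.cast_pos.mpr hn).ne'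
  suffices h : ∀ k : ℕ, ∀ t : ℝ, ((times X).filter (fun u => u < t)).card = k →
      ∏ u ∈ (times X).filter (fun u => u < t), (Yplus X u / Yat X u) = Yat X t / n by
    intro t; exact h _ t rfl
  intro k
  induction k using Nat.strong_induction_on with
  | _ k ih =>
    intro t hcard
    by_cases hs : ((times X).filter (fun u => u < t)) = ∅
    · rw [hs, Finset.prod_empty]
      have hfu : Finset.univ.filter (fun i => t ≤ X i) = Finset.univ := by
        apply Finset.filter_true_of_mem
        intro i _
        by_contra h
        push_neg at h
        exact Finset.eq_empty_iff_forall_notMem.mp hs (X i)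
          (Finset.mem_filter.mpr ⟨Finset.mem_image_of_mem X (Finset.mem_univ i), h⟩)
      have hYn : Yat X t = n := by
        unfold Yat; rw [hfu, Finset.card_univ, Fintype.card_fin]
      rw [hYn, div_self hnn]
    · have hne : ((times X).filter (fun u => u < t)).Nonempty :=
        Finset.nonempty_of_ne_empty hs
      set s := (times X).filter (fun u => u < t) with hsdef
      set m := s.max' hne with hmdef
      have hm : m ∈ s := s.max'_mem hne
      have hmT : m ∈ times X := (Finset.mem_filter.mp hm).1
      have hmt : m < t := (Finset.mem_filter.mp hm).2
      have herase : s.erase m = (times X).filter (fun u => u < m) := by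
        ext u
        simp only [Finset.mem_erase, hsdef, Finset.mem_filter]
        constructor
        · rintro ⟨hne', hu, hut⟩
          exact ⟨hu, lt_of_le_of_ne (s.le_max' u (by rw [hsdef]; exact Finset.mem_filter.mpr ⟨hu, hut⟩)) hne'⟩
        · rintro ⟨hu, hum⟩
          exact ⟨ne_of_lt hum, hu, hum.trans hmt⟩
      have hk : k ≠ 0 := by
        intro h; rw [h, Finset.card_eq_zero] at hcard; exact hs hcard
      have hcard' : ((times X).filter (fun u => u < m)).card = k - 1 := by
        rw [← herase, Finset.card_erase_of_mem hm, hcard]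
      have hIH := ih (k - 1) (Nat.sub_lt (Nat.pos_of_ne_zero hk) one_pos) m hcard'
      rw [← Finset.mul_prod_erase s _ hm, herase, hIH]
      have hYeq : Yplus X m = Yat X t := by
        unfold Yplus Yat
        congr 2
        ext i
        simp only [Finset.mem_filter, Finset.mem_univ, true_and]
        constructor
        · intro h
          by_contra h'
          push_neg at h'
          have hXi : X i ∈ s := Finset.mem_filter.mpr
            ⟨Finset.mem_image_of_mem X (Finset.mem_univ i), h'⟩
          exact absurd (s.le_max' (X i) hXi) (not_le.mpr h)
        · intro h; exact lt_of_lt_of_le hmt h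
      have hYm : Yat X m ≠ 0 := (yat_pos hmT).ne'
      rw [← hYeq]
      field_simp

end Helpers3
section Helpers4

lemma telescope (T : Finset ℝ) (g : ℝ → ℝ) : ∀ t : ℝ,
    ∑ v ∈ T.filter (fun v => v ≤ t),
      ((∏ u ∈ T.filter (fun u => u < v), g u) - ∏ u ∈ T.filter (fun u => u ≤ v), g u)
      = 1 - ∏ u ∈ T.filter (fun u => u ≤ t), g u := by
  suffices h : ∀ k : ℕ, ∀ t : ℝ, (T.filter (fun v => v ≤ t)).card = k →
      ∑ v ∈ T.filter (fun v => v ≤ t),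
        ((∏ u ∈ T.filter (fun u => u < v), g u) - ∏ u ∈ T.filter (fun u => u ≤ v), g u)
      = 1 - ∏ u ∈ T.filter (fun u => u ≤ t), g u by
    intro t; exact h _ t rfl
  intro k
  induction k using Nat.strong_induction_on with
  | _ k ih =>
    intro t hcard
    by_cases hs : T.filter (fun v => v ≤ t) = ∅
    · rw [hs]; simp
    · have hne : (T.filter (fun v => v ≤ t)).Nonempty := Finset.nonempty_of_ne_empty hs
      set s := T.filter (fun v => v ≤ t) with hsdef
      set m := s.max' hne with hmdef
      have hm : m ∈ s := s.max'_mem hne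
      have hmT : m ∈ T := (Finset.mem_filter.mp hm).1
      have hmt : m ≤ t := (Finset.mem_filter.mp hm).2
      have herase : s.erase m = T.filter (fun u => u < m) := by
        ext u
        simp only [Finset.mem_erase, hsdef, Finset.mem_filter]
        constructor
        · rintro ⟨hne', hu, hut⟩
          exact ⟨hu, lt_of_le_of_ne (s.le_max' u (by rw [hsdef]; exact Finset.mem_filter.mpr ⟨hu, hut⟩)) hne'⟩
        · rintro ⟨hu, hum⟩
          exact ⟨ne_of_lt hum, hu, hum.le.trans hmt⟩
      have hfilt : T.filter (fun u => u ≤ t) = T.filter (fun u => u ≤ m) := by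
        ext u
        simp only [Finset.mem_filter]
        constructor
        · rintro ⟨hu, hut⟩
          exact ⟨hu, s.le_max' u (by rw [hsdef]; exact Finset.mem_filter.mpr ⟨hu, hut⟩)⟩
        · rintro ⟨hu, hum⟩
          exact ⟨hu, hum.trans hmt⟩
      -- sum over erase
      have hsumerase : ∑ v ∈ s.erase m,
          ((∏ u ∈ T.filter (fun u => u < v), g u) - ∏ u ∈ T.filter (fun u => u ≤ v), g u)
          = 1 - ∏ u ∈ T.filter (fun u => u < m), g u := by
        rw [herase]
        by_cases hs2 : T.filter (fun u => u < m) = ∅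
        · rw [hs2]; simp
        · have hne2 : (T.filter (fun u => u < m)).Nonempty := Finset.nonempty_of_ne_empty hs2
          set m2 := (T.filter (fun u => u < m)).max' hne2 with hm2def
          have hm2 : m2 ∈ T.filter (fun u => u < m) := (T.filter (fun u => u < m)).max'_mem hne2
          have hm2T : m2 ∈ T := (Finset.mem_filter.mp hm2).1
          have hm2m : m2 < m := (Finset.mem_filter.mp hm2).2
          have hfilt2 : T.filter (fun u => u < m) = T.filter (fun u => u ≤ m2) := by
            ext u
            simp only [Finset.mem_filter]
            constructor
            · rintro ⟨hu, hum⟩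
              exact ⟨hu, (T.filter (fun u => u < m)).le_max' u (Finset.mem_filter.mpr ⟨hu, hum⟩)⟩
            · rintro ⟨hu, hum2⟩
              exact ⟨hu, lt_of_le_of_lt hum2 hm2m⟩
          have hcard2 : (T.filter (fun v => v ≤ m2)).card = k - 1 := by
            rw [← hfilt2, ← herase, Finset.card_erase_of_mem hm, hcard]
          have hk : k ≠ 0 := by
            intro h; rw [h, Finset.card_eq_zero] at hcard; exact hs hcard
          rw [hfilt2]
          exact ih (k - 1) (Nat.sub_lt (Nat.pos_of_ne_zero hk) one_pos) m2 hcard2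
      rw [← Finset.add_sum_erase s _ hm, hsumerase, hsdef, hfilt]
      ring
end Helpers4
section Helpers5

lemma telescope' (T : Finset ℝ) (g : ℝ → ℝ) (t : ℝ) :
    ∑ v ∈ T.filter (fun v => v < t),
      ((∏ u ∈ T.filter (fun u => u < v), g u) - ∏ u ∈ T.filter (fun u => u ≤ v), g u)
      = 1 - ∏ u ∈ T.filter (fun u => u < t), g u := by
  by_cases hs : T.filter (fun v => v < t) = ∅
  · rw [hs]; simp
  · have hne : (T.filter (fun v => v < t)).Nonempty := Finset.nonempty_of_ne_empty hs
    set m2 := (T.filter (fun v => v < t)).max' hne with hm2def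
    have hm2 : m2 ∈ T.filter (fun v => v < t) := (T.filter (fun v => v < t)).max'_mem hne
    have hm2t : m2 < t := (Finset.mem_filter.mp hm2).2
    have hfilt : T.filter (fun v => v < t) = T.filter (fun v => v ≤ m2) := by
      ext u
      simp only [Finset.mem_filter]
      constructor
      · rintro ⟨hu, hut⟩
        exact ⟨hu, (T.filter (fun v => v < t)).le_max' u (Finset.mem_filter.mpr ⟨hu, hut⟩)⟩
      · rintro ⟨hu, hum⟩
        exact ⟨hu, lt_of_le_of_lt hum hm2t⟩
    rw [hfilt]
    exact telescope T g m2

variable {n : ℕ}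

lemma kminus_mul_splminus (hn : 0 < n) (X : Fin n → ℝ) (D : Fin n → Bool) (t : ℝ) :
    Kminus X D t * SPLminus X D t = Yat X t / n := by
  unfold Kminus SPLminus
  rw [← Finset.prod_mul_distrib, ← prodRatio hn X t]
  apply Finset.prod_congr rfl
  intro u hu
  have huT := (Finset.mem_filter.mp hu).1
  rw [mul_comm]
  exact factor_eq X D (yat_pos huT)

lemma times_nonempty (hn : 0 < n) (X : Fin n → ℝ) : (times X).Nonempty :=
  ⟨X ⟨0, hn⟩, Finset.mem_image_of_mem X (Finset.mem_univ _)⟩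

lemma tau_eq_max' (hn : 0 < n) (X : Fin n → ℝ) :
    tau X = (times X).max' (times_nonempty hn X) := by
  unfold tau
  rw [← Finset.coe_max' (times_nonempty hn X)]
  rfl

lemma tau_mem (hn : 0 < n) (X : Fin n → ℝ) : tau X ∈ times X := by
  rw [tau_eq_max' hn]; exact (times X).max'_mem _

lemma le_tau (hn : 0 < n) {X : Fin n → ℝ} {u : ℝ} (hu : u ∈ times X) : u ≤ tau X := by
  rw [tau_eq_max' hn]; exact (times X).le_max' u hu

lemma jw_dN_eq (hn : 0 < n) (X : Fin n → ℝ) (D : Fin n → Bool) {v : ℝ}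
    (hv : v ∈ times X) :
    Jw X D v * dN X D v
      = (∏ u ∈ (times X).filter (fun u => u < v), (1 - dN X D u / Yat X u))
        - ∏ u ∈ (times X).filter (fun u => u ≤ v), (1 - dN X D u / Yat X u) := by
  have hQ : (times X).filter (fun u => u ≤ v) = insert v ((times X).filter (fun u => u < v)) := by
    ext u
    simp only [Finset.mem_filter, Finset.mem_insert]
    constructor
    · rintro ⟨huT, huv⟩
      rcases eq_or_lt_of_le huv with h | h
      · exact Or.inl h
      · exact Or.inr ⟨huT, h⟩
    · rintro (rfl | ⟨huT, h⟩)
      · exact ⟨hv, le_refl _⟩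
      · exact ⟨huT, h.le⟩
  have hvnot : v ∉ (times X).filter (fun u => u < v) := by
    simp [Finset.mem_filter]
  rw [hQ, Finset.prod_insert hvnot]
  have hK : 0 < Kminus X D v := kminus_pos X D hv
  have hY : 0 < Yat X v := yat_pos hv
  have hKS := kminus_mul_splminus hn X D v
  have hnn : (n : ℝ) ≠ 0 := (Nat.cast_pos.mpr hn).ne'
  have hKS' : (n : ℝ) * (Kminus X D v * SPLminus X D v) = Yat X v := by
    rw [hKS]; field_simp
  unfold Jw
  unfold SPLminus at hKS'
  rw [show ∀ P : ℝ, P - (1 - dN X D v / Yat X v) * P = P * dN X D v / Yat X v from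
    fun P => by ring]
  have hne2 : ((n:ℝ) * Kminus X D v) ≠ 0 := by positivity
  field_simp
  linear_combination (-(dN X D v)) * hKS'

lemma splminus_eq (hn : 0 < n) (X : Fin n → ℝ) (D : Fin n → Bool) {v : ℝ}
    (hv : v ∈ times X) :
    Jw X D v * Yat X v = SPLminus X D v := by
  have hK : 0 < Kminus X D v := kminus_pos X D hv
  have hKS := kminus_mul_splminus hn X D v
  have hnn : (n : ℝ) ≠ 0 := (Nat.cast_pos.mpr hn).ne'
  unfold Jw
  rw [one_div, mul_comm, ← div_eq_mul_inv, div_eq_iff (by positivity : ((n:ℝ) * Kminus X D v) ≠ 0)]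
  rw [show SPLminus X D v * ((n:ℝ) * Kminus X D v) = (n:ℝ) * (Kminus X D v * SPLminus X D v) from by ring, hKS]
  field_simp

end Helpers5
/-- RTTR equals the self-consistent/product-limit estimator, allowing
ties: `Ŝ_RTTR(t) = Ŝ_PL(t)` for `0 ≤ t < τ`, and `Ŝ_RTTR(t) = 0` for `t ≥ τ`. -/
theorem stmt17 (n : ℕ) (hn : 0 < n) (X : Fin n → ℝ) (D : Fin n → Bool)
    (hX : ∀ i, 0 < X i) :
    ∀ t : ℝ, 0 ≤ t →
      (t < tau X → SRTTR X D t = SPL X D t)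
      ∧ (tau X ≤ t → SRTTR X D t = 0) := by
  intro t ht
  constructor
  · intro htlt
    unfold SRTTR
    have hterm : ∀ v ∈ (times X).filter (fun v => v ≤ t),
        (Jw X D v * dN X D v * (if v < tau X then (1:ℝ) else 0)
          + Jw X D (tau X) * Yat X (tau X) * (if v = tau X then (1:ℝ) else 0))
        = ((∏ u ∈ (times X).filter (fun u => u < v), (1 - dN X D u / Yat X u))
          - ∏ u ∈ (times X).filter (fun u => u ≤ v), (1 - dN X D u / Yat X u)) := by
      intro v hv
      obtain ⟨hvT, hvt⟩ := Finset.mem_filter.mp hv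
      have hvτ : v < tau X := lt_of_le_of_lt hvt htlt
      rw [if_pos hvτ, if_neg (ne_of_lt hvτ), mul_one, mul_zero, add_zero]
      exact jw_dN_eq hn X D hvT
    rw [Finset.sum_congr rfl hterm,
      telescope (times X) (fun u => 1 - dN X D u / Yat X u) t]
    unfold SPL
    ring
  · intro hτt
    unfold SRTTR
    have hall : (times X).filter (fun v => v ≤ t) = times X :=
      Finset.filter_true_of_mem (fun v hv => (le_tau hn hv).trans hτt)
    rw [hall, Finset.sum_add_distrib]
    have hB : ∑ v ∈ times X,
        Jw X D (tau X) * Yat X (tau X) * (if v = tau X then (1:ℝ) else 0)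
        = SPLminus X D (tau X) := by
      rw [← splminus_eq hn X D (tau_mem hn X)]
      simp only [mul_ite, mul_one, mul_zero]
      rw [Finset.sum_ite_eq' (times X) (tau X) (fun _ => Jw X D (tau X) * Yat X (tau X))]
      rw [if_pos (tau_mem hn X)]
    have hA : ∑ v ∈ times X,
        Jw X D v * dN X D v * (if v < tau X then (1:ℝ) else 0)
        = 1 - SPLminus X D (tau X) := by
      simp only [mul_ite, mul_one, mul_zero]
      rw [← Finset.sum_filter]
      have hterm : ∀ v ∈ (times X).filter (fun v => v < tau X),
          Jw X D v * dN X D v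
          = ((∏ u ∈ (times X).filter (fun u => u < v), (1 - dN X D u / Yat X u))
            - ∏ u ∈ (times X).filter (fun u => u ≤ v), (1 - dN X D u / Yat X u)) := by
        intro v hv
        exact jw_dN_eq hn X D (Finset.mem_filter.mp hv).1
      rw [Finset.sum_congr rfl hterm,
        telescope' (times X) (fun u => 1 - dN X D u / Yat X u) (tau X)]
      rfl
    rw [hA, hB]
    ring
end SurvStmt
end
end
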